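/- Let p ∈ [2,∞), let q ≥ 1 and k ≥ 1 be integers, and let d be an integer with d ≥ 8k^{1+1/p} and d ≥ k. Let 0 < γ ≤ 1/(4k^{1+1/p}), set α := q + p/(p+1) and μ := γ/(4α·ln d). Let ξ ∈ {−1,+1}^d, and for i ∈ {1,…,k} define f_i : ℝ^d → ℝ by f_i(x) := μ·ln(Σ_{j=1}^i exp((ξ_j·x_j + (k−j)γ)/μ)) + μ(k+1−i)·d^{−α}. Let x* := −k^{−1/p}·Σ_{j=1}^k ξ_j·e_j, where e_j are the standard basis vectors. Then f_i(x*) ≤ −(1/4)·k^{−1/p} for every i ∈ {1,…,k}. -/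

import Mathlib

open Finset

set_option maxHeartbeats 1000000 in
/-- Lower-bound hard instance: the value of each `f_i` at the point
`x* = −k^{−1/p}·Σ_{j=1}^k ξ_j e_j` is at most `−(1/4)k^{−1/p}`. -/
theorem stmt17 (p : ℝ) (hp : 2 ≤ p) (q k d : ℕ) (hq : 1 ≤ q) (hk : 1 ≤ k)
    (hd : 8 * (k : ℝ) ^ (1 + 1 / p) ≤ (d : ℝ)) (hdk : k ≤ d)
    (γ : ℝ) (hγ0 : 0 < γ) (hγ : γ ≤ 1 / (4 * (k : ℝ) ^ (1 + 1 / p)))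
    (α μ : ℝ) (hα : α = (q : ℝ) + p / (p + 1))
    (hμ : μ = γ / (4 * α * Real.log d))
    (ξ : Fin d → ℝ) (hξ : ∀ j, ξ j = 1 ∨ ξ j = -1)
    (f : ℕ → (Fin d → ℝ) → ℝ)
    (hf : ∀ (i : ℕ) (x : Fin d → ℝ), f i x =
      μ * Real.log (∑ j ∈ univ.filter (fun j : Fin d => (j : ℕ) < i),
          Real.exp ((ξ j * x j + ((k : ℝ) - 1 - (j : ℕ)) * γ) / μ)) +
        μ * ((k : ℝ) + 1 - (i : ℝ)) * (d : ℝ) ^ (-α))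
    (xs : Fin d → ℝ)
    (hxs : ∀ j : Fin d, xs j = if (j : ℕ) < k then -(k : ℝ) ^ (-(1 / p)) * ξ j else 0) :
    ∀ i : ℕ, 1 ≤ i → i ≤ k → f i xs ≤ -(1 / 4) * (k : ℝ) ^ (-(1 / p)) := by
  intro i hi1 hik
  set K : ℝ := (k : ℝ) ^ (-(1 / p)) with hK
  have hp0 : (0:ℝ) < p := by linarith
  have hk1 : (1:ℝ) ≤ (k:ℝ) := by exact_mod_cast hk
  have hkpos : (0:ℝ) < (k:ℝ) := by linarith
  have hKpos : 0 < K := Real.rpow_pos_of_pos hkpos _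
  have hApos : (0:ℝ) < (k:ℝ) ^ (1 + 1/p) := Real.rpow_pos_of_pos hkpos _
  have hA1 : (1:ℝ) ≤ (k:ℝ) ^ (1 + 1/p) := by
    have : (k:ℝ) ^ (0:ℝ) ≤ (k:ℝ) ^ (1 + 1/p) :=
      Real.rpow_le_rpow_of_exponent_le hk1 (by positivity)
    simpa using this
  have hd8 : (8:ℝ) ≤ (d:ℝ) := le_trans (by linarith) hd
  have hdpos : (0:ℝ) < (d:ℝ) := by linarith
  have hd1 : (1:ℝ) ≤ (d:ℝ) := by linarith
  have hlogd : (1:ℝ) ≤ Real.log d := by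
    rw [Real.le_log_iff_exp_le hdpos]
    have := Real.exp_one_lt_d9
    linarith
  have hα1 : (1:ℝ) ≤ α := by
    have hq1 : (1:ℝ) ≤ (q:ℝ) := by exact_mod_cast hq
    have : 0 ≤ p / (p + 1) := by positivity
    rw [hα]; linarith
  have hμpos : 0 < μ := by
    rw [hμ]; positivity
  -- k * γ ≤ K / 4
  have hkA : (k:ℝ) * ((k:ℝ) ^ (1 + 1/p))⁻¹ = K := by
    rw [← Real.rpow_neg hkpos.le, hK]
    rw [show (k:ℝ) * (k:ℝ) ^ (-(1 + 1/p)) = (k:ℝ) ^ (1:ℝ) * (k:ℝ) ^ (-(1 + 1/p)) by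
      rw [Real.rpow_one], ← Real.rpow_add hkpos]
    norm_num
  have h2 : (k:ℝ) * γ ≤ K / 4 := by
    have h := mul_le_mul_of_nonneg_left hγ hkpos.le
    have e : (k:ℝ) * (1 / (4 * (k:ℝ) ^ (1 + 1/p))) = K / 4 := by
      rw [← hkA]
      field_simp [hApos.ne']
    linarith [e ▸ h]
  have h5 : γ ≤ K / 4 := by nlinarith
  -- bound the sum
  set E : ℝ := (-K + ((k:ℝ) - 1) * γ) / μ with hE
  set S : ℝ := ∑ j ∈ univ.filter (fun j : Fin d => (j : ℕ) < i),
      Real.exp ((ξ j * xs j + ((k : ℝ) - 1 - (j : ℕ)) * γ) / μ) with hS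
  have hterm : ∀ j ∈ univ.filter (fun j : Fin d => (j : ℕ) < i),
      Real.exp ((ξ j * xs j + ((k : ℝ) - 1 - (j : ℕ)) * γ) / μ) ≤ Real.exp E := by
    intro j hj
    have hji : (j:ℕ) < i := by simpa using hj
    have hjk : (j:ℕ) < k := lt_of_lt_of_le hji hik
    have hx : ξ j * xs j = -K := by
      rw [hxs j, if_pos hjk]
      rcases hξ j with h | h <;> rw [h] <;> ring
    apply Real.exp_le_exp.2
    rw [hx, hE]
    apply div_le_div_of_nonneg_right ?_ hμpos.le
    have : (0:ℝ) ≤ (j:ℕ) := Nat.cast_nonneg _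
    nlinarith
  have hcard : ((univ.filter (fun j : Fin d => (j : ℕ) < i)).card : ℝ) ≤ (k:ℝ) := by
    have hle : (univ.filter (fun j : Fin d => (j : ℕ) < i)).card ≤ (Finset.range i).card :=
      Finset.card_le_card_of_injOn (fun j : Fin d => (j:ℕ))
        (fun j hj => Finset.mem_range.2 (by simpa using hj))
        (fun a _ b _ h => Fin.val_injective h)
    have : (univ.filter (fun j : Fin d => (j : ℕ) < i)).card ≤ k := by
      simpa using le_trans hle (by simpa using hik)
    exact_mod_cast this
  have hS_le : S ≤ (k:ℝ) * Real.exp E := by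
    calc S ≤ ∑ _j ∈ univ.filter (fun j : Fin d => (j : ℕ) < i), Real.exp E :=
            Finset.sum_le_sum hterm
      _ = ((univ.filter (fun j : Fin d => (j : ℕ) < i)).card : ℝ) * Real.exp E := by
            rw [Finset.sum_const, nsmul_eq_mul]
      _ ≤ (k:ℝ) * Real.exp E := by
            exact mul_le_mul_of_nonneg_right hcard (Real.exp_pos _).le
  have hSpos : 0 < S := by
    apply Finset.sum_pos (fun j _ => Real.exp_pos _)
    refine ⟨⟨0, by omega⟩, ?_⟩
    simp [Nat.lt_of_lt_of_le hi1 hik]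
    omega
  have hlogS : Real.log S ≤ Real.log k + E := by
    have h := Real.log_le_log hSpos hS_le
    rwa [Real.log_mul (ne_of_gt hkpos) (Real.exp_ne_zero _), Real.log_exp] at h
  have hμE : μ * E = -K + ((k:ℝ) - 1) * γ := by
    rw [hE]; field_simp
  have hlogk : Real.log k ≤ Real.log d := Real.log_le_log hkpos (by exact_mod_cast hdk)
  have h1 : μ * Real.log k ≤ γ / 4 := by
    have hμd : μ * Real.log d = γ / (4 * α) := by
      rw [hμ]; field_simp
    have step1 : μ * Real.log k ≤ μ * Real.log d :=
      mul_le_mul_of_nonneg_left hlogk hμpos.le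
    have step2 : γ / (4 * α) ≤ γ / 4 := by
      apply div_le_div_of_nonneg_left hγ0.le (by norm_num) (by linarith)
    linarith [hμd ▸ step1]
  have h4 : μ ≤ γ / 4 := by
    rw [hμ]
    apply div_le_div_of_nonneg_left hγ0.le (by norm_num)
    nlinarith
  have h3 : μ * ((k : ℝ) + 1 - (i : ℝ)) * (d : ℝ) ^ (-α) ≤ μ := by
    have hi1' : (1:ℝ) ≤ (i:ℝ) := by exact_mod_cast hi1
    have hik' : (i:ℝ) ≤ (k:ℝ) := by exact_mod_cast hik
    have hda : (d:ℝ) ^ (-α) ≤ 1 / (d:ℝ) := by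
      have h := Real.rpow_le_rpow_of_exponent_le hd1 (show -α ≤ -1 by linarith)
      rw [Real.rpow_neg_one] at h
      simpa [one_div] using h
    have hdk' : (k:ℝ) ≤ (d:ℝ) := by exact_mod_cast hdk
    calc μ * ((k : ℝ) + 1 - (i : ℝ)) * (d : ℝ) ^ (-α)
        ≤ μ * (k:ℝ) * (1 / (d:ℝ)) := by
          apply mul_le_mul
          · apply mul_le_mul_of_nonneg_left (by linarith) hμpos.le
          · exact hda
          · positivity
          · positivity
      _ ≤ μ := by
          rw [mul_one_div, div_le_iff₀ hdpos]
          nlinarith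
  -- conclude
  rw [hf i xs]
  have hfin : μ * Real.log S ≤ μ * Real.log k + (-K + ((k:ℝ) - 1) * γ) := by
    have := mul_le_mul_of_nonneg_left hlogS hμpos.le
    rw [mul_add, hμE] at this
    linarith
  linarith
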